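/- Let p ≥ 5 be prime and set m = floor((p-1)/3). Then the rational number S = sum_{k=0}^{m} (3k)!/(k!^3) * 3^(-3k)/(k+1) has p-adic valuation at least 1; i.e., p divides the numerator of S (written in lowest terms), equivalently S ≡ 0 mod p as a p-integral rational. -/

import Mathlib

/-- Congruence of rationals: x ≡ y mod p^k in the p-integral rationals ℤ_(p). -/
def RatModCong (p k : ℕ) (x y : ℚ) : Prop :=
  ∃ a b : ℤ, ¬ (p : ℤ) ∣ b ∧ (x - y) * b = (p : ℚ) ^ k * a

lemma closed_form (n : ℕ) :
    (∑ k ∈ Finset.range (n + 1),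
      ((3 * k).factorial : ℚ) / ((k.factorial : ℚ) ^ 3) / (3 : ℚ) ^ (3 * k) / (k + 1))
    = (9 * (n + 1)) / 2 * ((3 * (n + 1)).factorial : ℚ)
        / (((n + 1).factorial : ℚ) ^ 3 * 3 ^ (3 * (n + 1))) := by
  induction n with
  | zero => norm_num [Nat.factorial]
  | succ n ih =>
    rw [Finset.sum_range_succ, ih]
    have h3 : 3 * (n + 1 + 1) = (3 * (n + 1)) + 1 + 1 + 1 := by ring
    have hf : ((3 * (n + 1 + 1)).factorial : ℚ)
        = ((3 * (n + 1) : ℕ) + 3) * (((3 * (n + 1) : ℕ) + 2) *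
          ((((3 * (n + 1) : ℕ)) + 1) * ((3 * (n + 1)).factorial : ℚ))) := by
      rw [h3]
      push_cast [Nat.factorial_succ]
      ring
    have hg : (((n + 1 + 1).factorial : ℚ)) = ((n : ℚ) + 2) * ((n + 1).factorial : ℚ) := by
      push_cast [Nat.factorial_succ]
      ring
    have hp3 : (3 : ℚ) ^ (3 * (n + 1 + 1)) = 27 * 3 ^ (3 * (n + 1)) := by
      have : 3 * (n + 1 + 1) = 3 * (n + 1) + 3 := by ring
      rw [this, pow_add]; norm_num; ring
    rw [hf, hg, hp3]
    have hfac : ((n + 1).factorial : ℚ) ≠ 0 := by positivity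
    have hfac3 : ((3 * (n + 1)).factorial : ℚ) ≠ 0 := by positivity
    have hpow : (3 : ℚ) ^ (3 * (n + 1)) ≠ 0 := by positivity
    have hn2 : ((n : ℚ) + 1 + 1) ≠ 0 := by positivity
    have hn2' : ((n : ℚ) + 2) ≠ 0 := by positivity
    field_simp
    push_cast
    ring

theorem sum_f_cong_zero (p : ℕ) (hp : p.Prime) (hp5 : 5 ≤ p) :
    RatModCong p 1
      (∑ k ∈ Finset.range ((p - 1) / 3 + 1),
        ((3 * k).factorial : ℚ) / ((k.factorial : ℚ) ^ 3) / (3 : ℚ) ^ (3 * k) / (k + 1))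
      0 := by
  set m := (p - 1) / 3 with hm
  set n := m + 1 with hn
  -- p ≤ 3n
  have hple : p ≤ 3 * n := by
    have h1 : p - 1 < 3 * (m + 1) := Nat.lt_mul_div_succ _ (by norm_num) |>.trans_le (le_refl _)
    omega
  have hnp : n < p := by
    have : m ≤ (p - 1) / 3 := le_of_eq hm
    have h2 : 3 * m ≤ p - 1 := by
      have := Nat.div_mul_le_self (p - 1) 3
      omega
    omega
  -- p divides (3n)!
  have hdvd : (p : ℤ) ∣ ((3 * n).factorial : ℤ) := by
    exact_mod_cast Int.natCast_dvd_natCast.mpr (Nat.dvd_factorial hp.pos hple)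
  obtain ⟨t, ht⟩ := hdvd
  refine ⟨9 * n * t, 2 * ((n.factorial : ℤ)) ^ 3 * 3 ^ (3 * n), ?_, ?_⟩
  · intro hdb
    have h2 : ¬ (p : ℤ) ∣ 2 := by
      intro h; have := Int.le_of_dvd (by norm_num) h; omega
    have h3 : ¬ (p : ℤ) ∣ 3 := by
      intro h; have := Int.le_of_dvd (by norm_num) h; omega
    have hfac : ¬ (p : ℤ) ∣ (n.factorial : ℤ) := by
      rw [Int.natCast_dvd_natCast]
      intro h
      exact absurd ((Nat.Prime.dvd_factorial hp).mp h) (by omega)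
    have hpI : Prime (p : ℤ) := Nat.prime_iff_prime_int.mp hp
    rcases (hpI.dvd_mul.mp hdb) with h | h
    · rcases hpI.dvd_mul.mp h with h | h
      · exact h2 h
      · exact hfac (hpI.dvd_of_dvd_pow h)
    · exact h3 (hpI.dvd_of_dvd_pow h)
  · rw [closed_form m, sub_zero]
    have hfac : ((n).factorial : ℚ) ≠ 0 := by positivity
    have hpow : (3 : ℚ) ^ (3 * n) ≠ 0 := by positivity
    have key : ((3 * n).factorial : ℚ) = (p : ℚ) * (t : ℚ) := by exact_mod_cast ht
    rw [hn] at *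
    push_cast
    rw [key]
    field_simp
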